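/- Fix δ ∈ [0,1) and let c be the unique positive solution of e^c = 1 + 2c (c ≈ 1.25643). Define the probability density p_δ on [0,1] by p_δ(x) = (1−δ)·(1 − e^{c/(1−δ)}) / ( c·( e^{c/(1−δ)}·(x−1) − x ) ). Then the continuous-time ski rental strategy that buys at time X ∼ p_δ has δ-CVaR competitive ratio exactly α_δ^{p_δ} = 2 − 1/(e^{c/(1−δ)} − 1). In particular α_δ^{p_δ} < 2 for all δ ∈ [0,1), hence the optimal δ-CVaR competitive ratio satisfies α_δ^* < 2 for all δ ∈ [0,1). -/

import Mathlib

open MeasureTheory Set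

/-- Conditional value-at-risk (loss version) of `f` under measure `μ` at level `δ`. -/
noncomputable def cvar (δ : ℝ) (μ : Measure ℝ) (f : ℝ → ℝ) : ℝ :=
  if δ = 1 then essSup f μ
  else ⨅ t : ℝ, t + (1 - δ)⁻¹ * ∫ x, max (f x - t) 0 ∂μ

/-- Continuous-time ski rental cost with buying cost 1. -/
noncomputable def csrCost (s x : ℝ) : ℝ := if x ≤ s then x + 1 else s

/-- `δ`-CVaR competitive ratio of strategy `μ` at adversary decision `s`. -/
noncomputable def csrRatio (δ : ℝ) (μ : Measure ℝ) (s : ℝ) : ℝ :=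
  cvar δ μ (fun x => csrCost s x) / min s 1

/-- `δ`-CVaR competitive ratio of strategy `μ` (supremum over adversary decisions `s > 0`). -/
noncomputable def csrCR (δ : ℝ) (μ : Measure ℝ) : ℝ :=
  ⨆ s : Ioi (0:ℝ), csrRatio δ μ (s : ℝ)

/-- Optimal `δ`-CVaR competitive ratio over all strategies (probability measures on `[0,∞)`). -/
noncomputable def csrOpt (δ : ℝ) : ℝ :=
  ⨅ μ : {m : Measure ℝ // IsProbabilityMeasure m ∧ m (Iio 0) = 0}, csrCR δ (μ : Measure ℝ)

open Real intervalIntegral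
open scoped ENNReal NNReal



-- c > 5/4 from exp c = 1 + 2c, c > 0
lemma c_gt_five_quarters {c : ℝ} (hc : 0 < c) (hce : Real.exp c = 1 + 2 * c) :
    5/4 < c := by
  by_contra h
  push_neg at h
  have hexp5 : Real.exp (5/4) < 7/2 := by
    have h4 : Real.exp (5/4) ^ (4:ℕ) = Real.exp 5 := by
      rw [← Real.exp_nat_mul]; norm_num
    have h5 : Real.exp 5 < (7/2:ℝ)^(4:ℕ) := by
      have : Real.exp 5 = Real.exp 1 ^ (5:ℕ) := by
        rw [← Real.exp_nat_mul]; norm_num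
      rw [this]
      have h1 := Real.exp_one_lt_d9
      calc Real.exp 1 ^ (5:ℕ) < 2.7182818286 ^ (5:ℕ) := by
            exact pow_lt_pow_left₀ h1 (Real.exp_pos 1).le (by norm_num)
        _ < (7/2:ℝ)^(4:ℕ) := by norm_num
    by_contra hge
    push_neg at hge
    have h6 := pow_le_pow_left₀ (show (0:ℝ) ≤ 7/2 by norm_num) hge 4
    rw [h4] at h6
    linarith
  rcases eq_or_lt_of_le h with heq | hlt
  · rw [heq] at hce; rw [hce] at hexp5; norm_num at hexp5
  · -- c < 5/4 : use strict convexity of exp on {0, 5/4}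
    have hconv := strictConvexOn_exp
    have h0 : (0:ℝ) ∈ Set.univ := trivial
    have h54 : (5/4:ℝ) ∈ Set.univ := trivial
    have hne : (0:ℝ) ≠ 5/4 := by norm_num
    have ha : (0:ℝ) < 1 - 4*c/5 := by linarith
    have hb : (0:ℝ) < 4*c/5 := by linarith
    have hab : (1 - 4*c/5) + 4*c/5 = 1 := by ring
    have := hconv.2 h0 h54 hne ha hb hab
    simp only [smul_eq_mul] at this
    have hc' : (1 - 4*c/5) * 0 + 4*c/5 * (5/4) = c := by ring
    rw [hc', Real.exp_zero] at this
    nlinarith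

-- φ inequality : w log w ≥ (1+c) w - (1+2c) for w > 0
lemma phi_ineq {c : ℝ} (hce : Real.exp c = 1 + 2 * c) {w : ℝ} (hw : 0 < w) :
    (1+c)*w - (1+2*c) ≤ w * Real.log w := by
  have h1 : Real.log (Real.exp c / w) ≤ Real.exp c / w - 1 :=
    Real.log_le_sub_one_of_pos (by positivity)
  rw [Real.log_div (Real.exp_pos c).ne' hw.ne', Real.log_exp] at h1
  have h2 : c - Real.log w ≤ Real.exp c / w - 1 := h1
  have h3 : (c - Real.log w) * w ≤ (Real.exp c / w - 1) * w := by
    exact mul_le_mul_of_nonneg_right h2 hw.le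
  rw [hce] at h3
  have : (1 + 2*c) / w * w = 1 + 2*c := by field_simp
  nlinarith [h3]

-- θ inequality for regime B
lemma theta_nonneg {c E : ℝ} (hc : 5/4 < c) (hce : Real.exp c = 1 + 2 * c)
    (hE : 1 + 2*c ≤ E) :
    ∀ v ∈ Icc (0:ℝ) c,
      0 ≤ (c+1-c/(E-1))*(Real.exp v - 1) - v - ((E-1)/E)*v*Real.exp v := by
  have hE1 : (1:ℝ) < E := by linarith
  have ha : (0:ℝ) < E - 1 := by linarith
  have hE0 : (0:ℝ) < E := by linarith
  set k : ℝ := c+1-c/(E-1) with hk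
  set r : ℝ := (E-1)/E with hrdef
  have hr0 : 0 < r := by positivity
  set θ : ℝ → ℝ := fun v => k*(Real.exp v - 1) - v - r*v*Real.exp v with hθ
  set θ' : ℝ → ℝ := fun v => (k - r - r*v)*Real.exp v - 1 with hθ'
  set θ'' : ℝ → ℝ := fun v => (k - 2*r - r*v)*Real.exp v with hθ''
  have hc0 : (0:ℝ) < c := by linarith
  -- key1 : θ'(0) ≥ 0
  have key1 : 0 ≤ k - r - 1 := by
    have hnum : 0 ≤ c*(E-1)*E - c*E - (E-1)^2 := by nlinarith
    have : k - r - 1 = (c*(E-1)*E - c*E - (E-1)^2)/((E-1)*E) := by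
      rw [hk, hrdef]; field_simp; ring
    rw [this]; positivity
  -- key2 : θ c ≥ 0
  have key2 : 0 ≤ θ c := by
    have : θ c = c * (2*k - 1 - r*(1+2*c)) := by
      simp only [hθ, hce]; ring
    rw [this]
    have h2 : 0 ≤ 2*k - 1 - r*(1+2*c) := by
      have hnum : 0 ≤ (2*c+1)*(E-1)*E - 2*c*E - (E-1)^2*(1+2*c) := by nlinarith
      have : 2*k - 1 - r*(1+2*c)
          = ((2*c+1)*(E-1)*E - 2*c*E - (E-1)^2*(1+2*c))/((E-1)*E) := by
        rw [hk, hrdef]; field_simp; ring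
      rw [this]; positivity
    positivity
  -- derivatives
  have hd1 : ∀ v : ℝ, HasDerivAt θ (θ' v) v := by
    intro v
    have h1 : HasDerivAt (fun v : ℝ => k*(Real.exp v - 1)) (k * Real.exp v) v := by
      simpa using (((Real.hasDerivAt_exp v).sub_const 1).const_mul k)
    have h2 : HasDerivAt (fun y : ℝ => r*y*Real.exp y)
        (r*Real.exp v + r*v*Real.exp v) v := by
      have h2' := ((hasDerivAt_id v).const_mul r).mul (Real.hasDerivAt_exp v)
      simp only [id_eq, one_mul, mul_one] at h2'
      exact h2'.congr_deriv (by ring)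
    have h3 := (h1.sub (hasDerivAt_id v)).sub h2
    exact h3.congr_deriv (by simp only [hθ']; ring)
  have hd2 : ∀ v : ℝ, HasDerivAt θ' (θ'' v) v := by
    intro v
    have h1 : HasDerivAt (fun v : ℝ => (k - r - r*v)*Real.exp v)
        ((-r)*Real.exp v + (k - r - r*v)*Real.exp v) v := by
      exact (((hasDerivAt_const v (k - r)).sub ((hasDerivAt_id v).const_mul r)).congr_deriv
        (by ring)).mul (Real.hasDerivAt_exp v)
    have := h1.sub_const 1
    exact this.congr_deriv (by simp [hθ'']; ring)
  have hθcont : Continuous θ := by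
    rw [hθ]; fun_prop
  have hθ'cont : Continuous θ' := by
    rw [hθ']; fun_prop
  -- split point
  set m : ℝ := max 0 (min ((k - 2*r)/r) c) with hm
  have hm0 : 0 ≤ m := le_max_left _ _
  have hmc : m ≤ c := max_le hc0.le (min_le_right _ _)
  -- θ' monotone on [0, m]
  have hmono' : MonotoneOn θ' (Icc 0 m) := by
    apply monotoneOn_of_hasDerivWithinAt_nonneg (convex_Icc 0 m) hθ'cont.continuousOn
      (f' := θ'') (fun x _ => (hd2 x).hasDerivWithinAt)
    intro x hx
    rw [interior_Icc] at hx
    have hmpos : 0 < m := hx.1.trans hx.2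
    have hy : m ≤ (k - 2*r)/r := by
      rcases le_or_gt 0 ((k - 2*r)/r) with hy0 | hy0
      · exact max_le hy0 (min_le_of_left_le le_rfl)
      · exfalso
        have hmz : m = 0 := by
          rw [hm, max_eq_left ((min_le_left _ _).trans hy0.le)]
        rw [hmz] at hmpos; exact lt_irrefl 0 hmpos
    have hxy : x ≤ (k - 2*r)/r := (hx.2.le.trans hy)
    have h1 : r * x ≤ k - 2*r := by
      have := (le_div_iff₀ hr0).mp hxy
      linarith
    have h2 : 0 ≤ k - 2*r - r*x := by linarith
    exact mul_nonneg h2 (Real.exp_pos x).le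
  -- θ' ≥ 0 on [0,m]
  have hθ'0 : θ' 0 = k - r - 1 := by simp [hθ']
  have hθ'nonneg : ∀ x ∈ Icc (0:ℝ) m, 0 ≤ θ' x := by
    intro x hx
    have := hmono' (left_mem_Icc.mpr hm0) hx hx.1
    rw [hθ'0] at this; linarith [key1]
  -- θ monotone on [0,m], hence θ ≥ 0 there
  have hmono : MonotoneOn θ (Icc 0 m) := by
    apply monotoneOn_of_hasDerivWithinAt_nonneg (convex_Icc 0 m) hθcont.continuousOn
      (f' := θ') (fun x _ => (hd1 x).hasDerivWithinAt)
    intro x hx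
    rw [interior_Icc] at hx
    exact hθ'nonneg x ⟨hx.1.le, hx.2.le⟩
  have hθ0 : θ 0 = 0 := by simp [hθ]
  have hpos1 : ∀ x ∈ Icc (0:ℝ) m, 0 ≤ θ x := by
    intro x hx
    have := hmono (left_mem_Icc.mpr hm0) hx hx.1
    rw [hθ0] at this; exact this
  -- θ concave on [m,c]
  have hconc : ConcaveOn ℝ (Icc m c) θ := by
    apply concaveOn_of_hasDerivWithinAt2_nonpos (convex_Icc m c) hθcont.continuousOn
      (f' := θ') (f'' := θ'') (fun x _ => (hd1 x).hasDerivWithinAt)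
      (fun x _ => (hd2 x).hasDerivWithinAt)
    intro x hx
    rw [interior_Icc] at hx
    have hxm : m < x := hx.1
    rcases le_or_gt ((k - 2*r)/r) c with hyc | hyc
    · have hym : (k - 2*r)/r ≤ m := by
        rw [hm]
        exact le_max_of_le_right (le_min le_rfl hyc)
      have : (k - 2*r)/r < x := lt_of_le_of_lt hym hxm
      have h1 : k - 2*r < r * x := by
        have := (div_lt_iff₀ hr0).mp this
        linarith
      have h2 : k - 2*r - r*x ≤ 0 := by linarith
      exact mul_nonpos_of_nonpos_of_nonneg h2 (Real.exp_pos x).le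
    · exfalso
      have hmc' : m = c := by
        rw [hm, min_eq_right hyc.le, max_eq_right hc0.le]
      rw [hmc'] at hxm
      exact absurd hx.2 (not_lt.mpr hxm.le)
  -- conclusion
  intro v hv
  show 0 ≤ θ v
  rcases le_total v m with hvm | hvm
  · exact hpos1 v ⟨hv.1, hvm⟩
  · have hseg : v ∈ segment ℝ m c := by
      rw [segment_eq_Icc hmc]; exact ⟨hvm, hv.2⟩
    have := hconc.ge_on_segment (left_mem_Icc.mpr hmc) (right_mem_Icc.mpr hmc) hseg
    have hminpos : 0 ≤ min (θ m) (θ c) :=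
      le_min (hpos1 m ⟨hm0, le_rfl⟩) key2
    linarith



noncomputable def csrP (β E c x : ℝ) : ℝ := β * (E - 1) / (c * (E - (E - 1) * x))

section Pfacts

variable {c β E : ℝ}

lemma denom_pos (hE1 : 1 < E) {x : ℝ} (hx : x ≤ 1) : 0 < E - (E-1)*x := by nlinarith

lemma csrP_nonneg (hc : 0 < c) (hβ : 0 < β) (hE1 : 1 < E) {x : ℝ} (hx : x ≤ 1) :
    0 ≤ csrP β E c x := by
  unfold csrP
  have h := denom_pos hE1 hx
  exact div_nonneg (by nlinarith) (by nlinarith)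

lemma csrP_le (hc : 0 < c) (hβ : 0 < β) (hE1 : 1 < E) {x : ℝ} (hx : x ≤ 1) :
    csrP β E c x ≤ β * (E-1) / c := by
  unfold csrP
  have h1 : (1:ℝ) ≤ E - (E-1)*x := by nlinarith
  rw [div_le_div_iff₀ (by nlinarith) hc]
  have hb : 0 ≤ β * (E-1) * c := (mul_pos (mul_pos hβ (show (0:ℝ) < E-1 by linarith)) hc).le
  nlinarith [mul_le_mul_of_nonneg_left h1 hb]

lemma csrP_cont (hc : 0 < c) (hE1 : 1 < E) : ContinuousOn (csrP β E c) (Icc 0 1) := by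
  apply ContinuousOn.div continuousOn_const
  · fun_prop
  · intro x hx
    have := denom_pos hE1 hx.2
    positivity

lemma csrP_meas : Measurable (csrP β E c) := by
  unfold csrP
  fun_prop

lemma integral_csrP (hc : 0 < c) (hβ : 0 < β) (hE1 : 1 < E)
    {u v : ℝ} (h0u : 0 ≤ u) (huv : u ≤ v) (hv1 : v ≤ 1) :
    ∫ x in u..v, csrP β E c x
      = (β/c) * (Real.log (E - (E-1)*u) - Real.log (E - (E-1)*v)) := by
  have key : ∀ x ∈ uIcc u v,
      HasDerivAt (fun y => -(β/c) * Real.log (E - (E-1)*y)) (csrP β E c x) x := by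
    intro x hx
    rw [uIcc_of_le huv] at hx
    have hx1 : x ≤ 1 := hx.2.trans hv1
    have hd := denom_pos hE1 hx1
    have hg : HasDerivAt (fun y : ℝ => E - (E-1)*y) (-(E-1)) x := by
      simpa using ((hasDerivAt_id x).const_mul (E-1)).const_sub E
    have hl := (Real.hasDerivAt_log hd.ne').comp x hg
    have := hl.const_mul (-(β/c))
    apply this.congr_deriv
    unfold csrP
    field_simp
  have hint : IntervalIntegrable (csrP β E c) volume u v := by
    apply ContinuousOn.intervalIntegrable
    apply (csrP_cont hc hE1).mono
    rw [uIcc_of_le huv]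
    intro x hx; exact ⟨h0u.trans hx.1, hx.2.trans hv1⟩
  rw [intervalIntegral.integral_eq_sub_of_hasDerivAt key hint]
  ring

lemma integral_xadd_mul_csrP (hc : 0 < c) (hβ : 0 < β) (hE1 : 1 < E)
    {u v : ℝ} (γ : ℝ) (h0u : 0 ≤ u) (huv : u ≤ v) (hv1 : v ≤ 1) :
    ∫ x in u..v, (x + γ) * csrP β E c x
      = (β/c) * ((u - v) + ((E + γ*(E-1))/(E-1))
          * (Real.log (E - (E-1)*u) - Real.log (E - (E-1)*v))) := by
  have hE0 : (0:ℝ) < E - 1 := by linarith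
  have key : ∀ x ∈ uIcc u v,
      HasDerivAt (fun y => (β/c) * (-y - ((E + γ*(E-1))/(E-1)) * Real.log (E - (E-1)*y)))
        ((x + γ) * csrP β E c x) x := by
    intro x hx
    rw [uIcc_of_le huv] at hx
    have hx1 : x ≤ 1 := hx.2.trans hv1
    have hd := denom_pos hE1 hx1
    have hg : HasDerivAt (fun y : ℝ => E - (E-1)*y) (-(E-1)) x := by
      simpa using ((hasDerivAt_id x).const_mul (E-1)).const_sub E
    have hl := (Real.hasDerivAt_log hd.ne').comp x hg
    have h2 := (hl.const_mul ((E + γ*(E-1))/(E-1))).const_sub 0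
    have h3 : HasDerivAt (fun y : ℝ =>
        -y - ((E + γ*(E-1))/(E-1)) * Real.log (E - (E-1)*y))
        (-1 - ((E + γ*(E-1))/(E-1)) * ((E - (E-1)*x)⁻¹ * -(E-1))) x := by
      exact ((hasDerivAt_id x).neg).sub (hl.const_mul ((E + γ*(E-1))/(E-1)))
    have := h3.const_mul (β/c)
    apply this.congr_deriv
    unfold csrP
    field_simp
    ring
  have hint : IntervalIntegrable (fun x => (x + γ) * csrP β E c x) volume u v := by
    apply ContinuousOn.intervalIntegrable
    apply ContinuousOn.mul (by fun_prop)
    apply (csrP_cont hc hE1).mono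
    rw [uIcc_of_le huv]
    intro x hx; exact ⟨h0u.trans hx.1, hx.2.trans hv1⟩
  rw [intervalIntegral.integral_eq_sub_of_hasDerivAt key hint]
  ring

end Pfacts

section Master

variable {c β E : ℝ}

lemma master_integral (hc : 0 < c) (hβ : 0 < β) (hE1 : 1 < E)
    {u v γ : ℝ} (h0u : 0 ≤ u) (huv : u ≤ v) (hv1 : v ≤ 1)
    {G : ℝ → ℝ} (hGmeas : Measurable G) {C : ℝ} (hbd : ∀ x ∈ Icc (0:ℝ) 1, |G x| ≤ C)
    (h1 : ∀ x, 0 ≤ x → x < u → G x = 0)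
    (h2 : ∀ x ∈ Icc u v, G x = (x + γ) * csrP β E c x)
    (h3 : ∀ x, v < x → x ≤ 1 → G x = 0) :
    ∫ x in (0:ℝ)..1, G x
      = (β/c) * ((u - v) + ((E + γ*(E-1))/(E-1))
          * (Real.log (E-(E-1)*u) - Real.log (E-(E-1)*v))) := by
  have hu1 : u ≤ 1 := huv.trans hv1
  have h0v : 0 ≤ v := h0u.trans huv
  have hGint : IntegrableOn G (Icc 0 1) volume := by
    apply Measure.integrableOn_of_bounded (M := C)
    · rw [Real.volume_Icc]; exact ENNReal.ofReal_ne_top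
    · exact hGmeas.aestronglyMeasurable
    · exact (ae_restrict_iff' measurableSet_Icc).2 (ae_of_all _ fun x hx => by
        rw [Real.norm_eq_abs]; exact hbd x hx)
  have i1 : IntervalIntegrable G volume 0 u := by
    rw [intervalIntegrable_iff_integrableOn_Ioc_of_le h0u]
    exact hGint.mono_set (Ioc_subset_Icc_self.trans (Icc_subset_Icc le_rfl hu1))
  have i2 : IntervalIntegrable G volume u v := by
    rw [intervalIntegrable_iff_integrableOn_Ioc_of_le huv]
    exact hGint.mono_set (Ioc_subset_Icc_self.trans (Icc_subset_Icc h0u hv1))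
  have i3 : IntervalIntegrable G volume v 1 := by
    rw [intervalIntegrable_iff_integrableOn_Ioc_of_le hv1]
    exact hGint.mono_set (Ioc_subset_Icc_self.trans (Icc_subset_Icc h0v le_rfl))
  have split : ∫ x in (0:ℝ)..1, G x
      = (∫ x in (0:ℝ)..u, G x) + (∫ x in u..v, G x) + (∫ x in v..(1:ℝ), G x) := by
    rw [integral_add_adjacent_intervals i1 i2,
      integral_add_adjacent_intervals (i1.trans i2) i3]
  have z1 : ∫ x in (0:ℝ)..u, G x = 0 := by
    rw [intervalIntegral.integral_of_le h0u, MeasureTheory.integral_Ioc_eq_integral_Ioo]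
    rw [MeasureTheory.setIntegral_congr_fun measurableSet_Ioo
      (g := fun _ => (0:ℝ)) (fun x hx => h1 x hx.1.le hx.2)]
    simp
  have z3 : ∫ x in v..(1:ℝ), G x = 0 := by
    rw [intervalIntegral.integral_of_le hv1, MeasureTheory.integral_Ioc_eq_integral_Ioo]
    rw [MeasureTheory.setIntegral_congr_fun measurableSet_Ioo
      (g := fun _ => (0:ℝ)) (fun x hx => h3 x hx.1 hx.2.le)]
    simp
  have mid : ∫ x in u..v, G x = ∫ x in u..v, (x + γ) * csrP β E c x := by
    apply intervalIntegral.integral_congr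
    rw [uIcc_of_le huv]
    exact h2
  rw [split, z1, z3, mid, integral_xadd_mul_csrP hc hβ hE1 γ h0u huv hv1]
  ring

end Master

section Mu

variable {c β E : ℝ}

lemma integral_csrMu (hc : 0 < c) (hβ : 0 < β) (hE1 : 1 < E)
    (g : ℝ → ℝ) :
    ∫ x, g x ∂((volume.restrict (Icc (0:ℝ) 1)).withDensity
        (fun x => ENNReal.ofReal (csrP β E c x)))
      = ∫ x in (0:ℝ)..1, g x * csrP β E c x := by
  have hmeas : Measurable (fun x => (csrP β E c x).toNNReal) :=
    measurable_real_toNNReal.comp csrP_meas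
  have hd : (fun x => ENNReal.ofReal (csrP β E c x))
      = fun x => ((fun x => (csrP β E c x).toNNReal) x : ℝ≥0∞) := rfl
  rw [hd, integral_withDensity_eq_integral_smul hmeas g]
  have : ∫ x in Icc (0:ℝ) 1, ((csrP β E c x).toNNReal : ℝ≥0) • g x
      = ∫ x in Icc (0:ℝ) 1, g x * csrP β E c x := by
    apply MeasureTheory.setIntegral_congr_fun measurableSet_Icc
    intro x hx
    have hnn := csrP_nonneg hc hβ hE1 hx.2
    simp only [NNReal.smul_def, Real.coe_toNNReal _ hnn, smul_eq_mul]
    ring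
  rw [this, MeasureTheory.integral_Icc_eq_integral_Ioc,
    ← intervalIntegral.integral_of_le zero_le_one]

lemma csrMu_prob (hc : 0 < c) (hβ : 0 < β) (hE1 : 1 < E) (hlogE : Real.log E = c/β) :
    IsProbabilityMeasure ((volume.restrict (Icc (0:ℝ) 1)).withDensity
        (fun x => ENNReal.ofReal (csrP β E c x))) := by
  constructor
  rw [withDensity_apply _ MeasurableSet.univ, Measure.restrict_univ]
  have hint : IntegrableOn (csrP β E c) (Icc 0 1) volume :=
    (csrP_cont hc hE1).integrableOn_Icc
  have hnn : 0 ≤ᵐ[volume.restrict (Icc (0:ℝ) 1)] csrP β E c :=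
    (ae_restrict_iff' measurableSet_Icc).2
      (ae_of_all _ fun x hx => csrP_nonneg hc hβ hE1 hx.2)
  rw [← MeasureTheory.ofReal_integral_eq_lintegral_ofReal hint hnn]
  have : ∫ x in Icc (0:ℝ) 1, csrP β E c x = 1 := by
    rw [MeasureTheory.integral_Icc_eq_integral_Ioc,
      ← intervalIntegral.integral_of_le zero_le_one,
      integral_csrP hc hβ hE1 le_rfl zero_le_one le_rfl]
    have e1 : E - (E-1)*0 = E := by ring
    have e2 : E - (E-1)*1 = 1 := by ring
    rw [e1, e2, Real.log_one, hlogE]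
    field_simp
    ring
  rw [this]
  exact ENNReal.ofReal_one

lemma csrMu_null (hβ : 0 < β) :
    ((volume.restrict (Icc (0:ℝ) 1)).withDensity
        (fun x => ENNReal.ofReal (csrP β E c x))) (Iio 0) = 0 := by
  rw [withDensity_apply _ measurableSet_Iio,
    MeasureTheory.Measure.restrict_restrict measurableSet_Iio]
  have : Iio (0:ℝ) ∩ Icc 0 1 = ∅ := by
    ext x; simp only [mem_inter_iff, mem_Iio, mem_Icc, mem_empty_iff_false, iff_false]
    rintro ⟨h1, h2, _⟩; linarith
  rw [this, Measure.restrict_empty, lintegral_zero_measure]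

end Mu

section Main

variable {δ c β E : ℝ}

lemma cost_meas (s : ℝ) : Measurable (csrCost s) := by
  unfold csrCost
  exact Measurable.ite measurableSet_Iic (measurable_id.add_const 1) measurable_const

lemma cost_nonneg {s x : ℝ} (hs : 0 < s) (hx : 0 ≤ x) : 0 ≤ csrCost s x := by
  unfold csrCost; split <;> linarith

lemma cost_le {s x : ℝ} (hs : 0 < s) (hx : x ≤ 1) : csrCost s x ≤ s + 2 := by
  unfold csrCost; split <;> linarith

lemma maxG_meas (s t : ℝ) :
    Measurable (fun x => max (csrCost s x - t) 0 * csrP β E c x) :=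
  (((cost_meas s).sub measurable_const).max measurable_const).mul csrP_meas

lemma maxG_bd (hc : 0 < c) (hβ : 0 < β) (hE1 : 1 < E) {s t : ℝ} (hs : 0 < s) :
    ∀ x ∈ Icc (0:ℝ) 1,
      |max (csrCost s x - t) 0 * csrP β E c x| ≤ (s + 2 + |t|) * (β*(E-1)/c) := by
  intro x hx
  have hP0 := csrP_nonneg hc hβ hE1 hx.2
  have hP1 := csrP_le hc hβ hE1 hx.2
  have hm0 : 0 ≤ max (csrCost s x - t) 0 := le_max_right _ _
  have hm1 : max (csrCost s x - t) 0 ≤ s + 2 + |t| := by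
    apply max_le
    · have := cost_le hs hx.2
      have := neg_abs_le t
      linarith
    · have := abs_nonneg t
      linarith
  rw [abs_of_nonneg (mul_nonneg hm0 hP0)]
  exact mul_le_mul hm1 hP1 hP0 (by positivity)

/-- the central integral computation -/
lemma hval (hc : 0 < c) (hβ0 : 0 < β) (hE1 : 1 < E)
    {s t u v γ : ℝ} (hs0 : 0 < s) (h0u : 0 ≤ u) (huv : u ≤ v) (hv1 : v ≤ 1)
    (h1 : ∀ x, 0 ≤ x → x < u → max (csrCost s x - t) 0 = 0)
    (h2 : ∀ x ∈ Icc u v, max (csrCost s x - t) 0 = x + γ)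
    (h3 : ∀ x, v < x → x ≤ 1 → max (csrCost s x - t) 0 = 0) :
    ∫ x, max (csrCost s x - t) 0
        ∂((volume.restrict (Icc (0:ℝ) 1)).withDensity
          (fun x => ENNReal.ofReal (csrP β E c x)))
      = (β/c) * ((u - v) + ((E + γ*(E-1))/(E-1))
          * (Real.log (E-(E-1)*u) - Real.log (E-(E-1)*v))) := by
  rw [integral_csrMu hc hβ0 hE1]
  apply master_integral hc hβ0 hE1 h0u huv hv1 (maxG_meas s t)
    (maxG_bd hc hβ0 hE1 hs0)
  · intro x hx hxu; rw [h1 x hx hxu, zero_mul]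
  · intro x hx; rw [h2 x hx]
  · intro x hxv hx1; rw [h3 x hxv hx1, zero_mul]

end Main

section Main2

variable {δ c β E : ℝ}

lemma maxG_intInt (hc : 0 < c) (hβ : 0 < β) (hE1 : 1 < E) {s t : ℝ} (hs : 0 < s) :
    IntervalIntegrable (fun x => max (csrCost s x - t) 0 * csrP β E c x) volume 0 1 := by
  rw [intervalIntegrable_iff_integrableOn_Ioc_of_le zero_le_one]
  apply MeasureTheory.IntegrableOn.mono_set (t := Icc (0:ℝ) 1) _ Ioc_subset_Icc_self
  apply Measure.integrableOn_of_bounded (M := (s + 2 + |t|) * (β*(E-1)/c))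
  · rw [Real.volume_Icc]; exact ENNReal.ofReal_ne_top
  · exact (maxG_meas s t).aestronglyMeasurable
  · exact (ae_restrict_iff' measurableSet_Icc).2 (ae_of_all _ fun x hx => by
      rw [Real.norm_eq_abs]; exact maxG_bd hc hβ hE1 hs x hx)

/-- every `h t` is nonnegative -/
lemma h_nonneg (hc : 0 < c) (hβ0 : 0 < β) (hβ1 : β ≤ 1) (hE1 : 1 < E)
    (hlogE : Real.log E = c/β) {s : ℝ} (hs0 : 0 < s) (t : ℝ) :
    0 ≤ t + β⁻¹ * ∫ x, max (csrCost s x - t) 0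
        ∂((volume.restrict (Icc (0:ℝ) 1)).withDensity
          (fun x => ENNReal.ofReal (csrP β E c x))) := by
  rw [integral_csrMu hc hβ0 hE1]
  set G : ℝ → ℝ := fun x => max (csrCost s x - t) 0 * csrP β E c x with hG
  have hGnn : ∀ x ∈ Icc (0:ℝ) 1, 0 ≤ G x := fun x hx =>
    mul_nonneg (le_max_right _ _) (csrP_nonneg hc hβ0 hE1 hx.2)
  have hInn : 0 ≤ ∫ x in (0:ℝ)..1, G x :=
    intervalIntegral.integral_nonneg zero_le_one hGnn
  rcases le_or_gt 0 t with ht | ht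
  · have : 0 ≤ β⁻¹ * ∫ x in (0:ℝ)..1, G x := by positivity
    linarith
  · -- t < 0 : G ≥ (-t) * P pointwise
    have hPint : IntervalIntegrable (fun x => (-t) * csrP β E c x) volume 0 1 := by
      apply IntervalIntegrable.const_mul
      rw [intervalIntegrable_iff_integrableOn_Ioc_of_le zero_le_one]
      apply MeasureTheory.IntegrableOn.mono_set (t := Icc (0:ℝ) 1) _ Ioc_subset_Icc_self
      apply Measure.integrableOn_of_bounded (M := β*(E-1)/c)
      · rw [Real.volume_Icc]; exact ENNReal.ofReal_ne_top
      · exact csrP_meas.aestronglyMeasurable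
      · exact (ae_restrict_iff' measurableSet_Icc).2 (ae_of_all _ fun x hx => by
          rw [Real.norm_eq_abs, abs_of_nonneg (csrP_nonneg hc hβ0 hE1 hx.2)]
          exact csrP_le hc hβ0 hE1 hx.2)
    have hmono : ∫ x in (0:ℝ)..1, (-t) * csrP β E c x ≤ ∫ x in (0:ℝ)..1, G x := by
      apply intervalIntegral.integral_mono_on zero_le_one hPint
        (maxG_intInt hc hβ0 hE1 hs0)
      intro x hx
      have hP0 := csrP_nonneg hc hβ0 hE1 hx.2
      apply mul_le_mul_of_nonneg_right _ hP0
      have h1 : -t ≤ csrCost s x - t := by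
        have := cost_nonneg hs0 hx.1; linarith
      exact h1.trans (le_max_left _ _)
    have hPval : ∫ x in (0:ℝ)..1, (-t) * csrP β E c x = -t := by
      rw [intervalIntegral.integral_const_mul, integral_csrP hc hβ0 hE1 le_rfl zero_le_one le_rfl]
      have e1 : E - (E-1)*0 = E := by ring
      have e2 : E - (E-1)*1 = 1 := by ring
      rw [e1, e2, Real.log_one, hlogE]
      field_simp
      ring
    have hβinv : 1 ≤ β⁻¹ := by
      rw [le_inv_comm₀] <;> simp [hβ0, hβ1]
    have h2 : β⁻¹ * (-t) ≤ β⁻¹ * ∫ x in (0:ℝ)..1, G x := by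
      apply mul_le_mul_of_nonneg_left _ (by positivity)
      rw [← hPval]; exact hmono
    nlinarith
end Main2

section CvarLemmas

variable {δ c β E : ℝ}

lemma basics (hδ0 : 0 ≤ δ) (hδ1 : δ < 1) (hβ : β = 1 - δ) (hc : 0 < c)
    (hce : Real.exp c = 1 + 2*c) (hE : E = Real.exp (c/β)) :
    0 < β ∧ β ≤ 1 ∧ 5/4 < c ∧ Real.log E = c/β ∧ 1+2*c ≤ E ∧ 1 < E := by
  have hβ0 : 0 < β := by rw [hβ]; linarith
  have hβ1 : β ≤ 1 := by rw [hβ]; linarith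
  have hc54 := c_gt_five_quarters hc hce
  have hlogE : Real.log E = c/β := by rw [hE, Real.log_exp]
  have hE2c : 1+2*c ≤ E := by
    rw [← hce, hE]
    apply Real.exp_le_exp.2
    rw [le_div_iff₀ hβ0]
    nlinarith
  exact ⟨hβ0, hβ1, hc54, hlogE, hE2c, by linarith⟩

/-- upper bound for s ≥ 1 -/
lemma cvar_ub_big (hδ0 : 0 ≤ δ) (hδ1 : δ < 1) (hβ : β = 1 - δ) (hc : 0 < c)
    (hce : Real.exp c = 1 + 2*c) (hE : E = Real.exp (c/β)) {s : ℝ} (hs : 1 ≤ s) :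
    cvar δ ((volume.restrict (Icc (0:ℝ) 1)).withDensity
        (fun x => ENNReal.ofReal (csrP β E c x))) (fun x => csrCost s x)
      ≤ 2 - 1/(E-1) := by
  obtain ⟨hβ0, hβ1, hc54, hlogE, hE2c, hE1⟩ := basics hδ0 hδ1 hβ hc hce hE
  have ha : (0:ℝ) < E - 1 := by linarith
  have hs0 : (0:ℝ) < s := by linarith
  unfold cvar
  rw [if_neg hδ1.ne, ← hβ]
  have hbdd : BddBelow (Set.range (fun t : ℝ => t + β⁻¹ * ∫ x, max (csrCost s x - t) 0
      ∂((volume.restrict (Icc (0:ℝ) 1)).withDensity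
        (fun x => ENNReal.ofReal (csrP β E c x))))) := by
    refine ⟨0, ?_⟩
    rintro y ⟨t, rfl⟩
    exact h_nonneg hc hβ0 hβ1 hE1 hlogE hs0 t
  set q : ℝ := (E - (1+2*c))/(E-1) with hqdef
  have haq : (E-1)*q = E - (1+2*c) := by rw [hqdef]; field_simp
  have hq0 : 0 ≤ q := div_nonneg (by linarith) (by linarith)
  have hq1 : q ≤ 1 := by rw [hqdef, div_le_one ha]; linarith
  refine le_trans (ciInf_le hbdd (1+q)) ?_
  rw [hval hc hβ0 hE1 hs0 hq0 hq1 le_rfl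
    (γ := -q)
    (fun x hx0 hxq => by
      unfold csrCost
      rw [if_pos (by linarith : x ≤ s)]
      exact max_eq_right (by linarith))
    (fun x hx => by
      unfold csrCost
      rw [if_pos (by linarith [hx.2] : x ≤ s)]
      rw [max_eq_left (by linarith [hx.1])]
      ring)
    (fun x hx1 hx2 => by linarith)]
  have e1 : E-(E-1)*q = 1+2*c := by linarith
  have e2 : E-(E-1)*1 = 1 := by ring
  have e3 : E + (-q)*(E-1) = 1+2*c := by linarith
  have hlog2c : Real.log (1+2*c) = c := by rw [← hce, Real.log_exp]
  rw [e1, e2, e3, Real.log_one, hlog2c]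
  apply le_of_eq
  rw [hqdef]
  field_simp
  ring

/-- lower bound for s ≥ 1 -/
lemma cvar_lb_big (hδ0 : 0 ≤ δ) (hδ1 : δ < 1) (hβ : β = 1 - δ) (hc : 0 < c)
    (hce : Real.exp c = 1 + 2*c) (hE : E = Real.exp (c/β)) {s : ℝ} (hs : 1 ≤ s) :
    2 - 1/(E-1) ≤ cvar δ ((volume.restrict (Icc (0:ℝ) 1)).withDensity
        (fun x => ENNReal.ofReal (csrP β E c x))) (fun x => csrCost s x) := by
  obtain ⟨hβ0, hβ1, hc54, hlogE, hE2c, hE1⟩ := basics hδ0 hδ1 hβ hc hce hE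
  have ha : (0:ℝ) < E - 1 := by linarith
  have hs0 : (0:ℝ) < s := by linarith
  unfold cvar
  rw [if_neg hδ1.ne, ← hβ]
  apply le_ciInf
  intro t
  rcases le_or_gt 2 t with ht2 | ht2
  · rw [hval hc hβ0 hE1 hs0 (zero_le_one) le_rfl le_rfl
      (γ := -1)
      (fun x hx0 hx1 => by
        unfold csrCost
        rw [if_pos (by linarith : x ≤ s)]
        exact max_eq_right (by linarith))
      (fun x hx => by
        have hx1 : x = 1 := le_antisymm hx.2 hx.1
        subst hx1
        unfold csrCost
        rw [if_pos (by linarith : (1:ℝ) ≤ s)]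
        rw [max_eq_right (by linarith)]
        ring)
      (fun x hx1 hx2 => by linarith)]
    have h1a : 0 < 1/(E-1) := by positivity
    have : (β/c) * ((1 - 1) + ((E + (-1)*(E-1))/(E-1))
        * (Real.log (E-(E-1)*1) - Real.log (E-(E-1)*1))) = 0 := by ring
    rw [this, mul_zero, add_zero]
    linarith
  · set τ : ℝ := max (t-1) 0 with hτdef
    have hτ0 : 0 ≤ τ := le_max_right _ _
    have hτ1 : τ ≤ 1 := max_le (by linarith) zero_le_one
    have hτt : t - 1 ≤ τ := le_max_left _ _
    rw [hval hc hβ0 hE1 hs0 hτ0 hτ1 le_rfl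
      (γ := 1-t)
      (fun x hx0 hxτ => by
        have hτpos : 0 < τ := lt_of_le_of_lt hx0 hxτ
        have hτeq : τ = t - 1 := by
          rcases le_or_gt (t-1) 0 with h | h
          · exfalso
            rw [hτdef, max_eq_right h] at hτpos
            exact lt_irrefl 0 hτpos
          · rw [hτdef, max_eq_left h.le]
        unfold csrCost
        rw [if_pos (by linarith : x ≤ s)]
        apply max_eq_right
        rw [hτeq] at hxτ
        linarith)
      (fun x hx => by
        unfold csrCost
        rw [if_pos (by linarith [hx.2] : x ≤ s)]
        rw [max_eq_left (by linarith [hx.1, hτt])]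
        ring)
      (fun x hx1 hx2 => by linarith)]
    have e2 : E-(E-1)*1 = 1 := by ring
    rw [e2, Real.log_one]
    rcases le_or_gt t 1 with ht1 | ht1
    · -- τ = 0
      have hτeq : τ = 0 := by rw [hτdef]; exact max_eq_right (by linarith)
      rw [hτeq]
      have e0 : E-(E-1)*0 = E := by ring
      rw [e0, hlogE]
      have hkey : β*((1+c)*E - (1+2*c)) ≤ c*E := by
        have hphi := phi_ineq hce (show (0:ℝ) < E by linarith)
        rw [hlogE] at hphi
        have := mul_le_mul_of_nonneg_left hphi hβ0.le
        have heq : β * (E * (c/β)) = c*E := by field_simp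
        nlinarith
      rw [← sub_nonneg]
      have heq : (t + β⁻¹ * ((β/c) * ((0 - 1) + ((E + (1-t)*(E-1))/(E-1)) * (c/β - 0))))
          - (2 - 1/(E-1))
          = ((E-1)*c*β*t - (E-1)*β + c*E + c*(1-t)*(E-1) - 2*(E-1)*c*β + c*β)
            / ((E-1)*c*β) := by
        field_simp
        ring
      rw [heq]
      apply div_nonneg _ (by positivity)
      nlinarith [mul_nonneg (mul_nonneg (mul_nonneg ha.le hc.le)
        (by linarith : (0:ℝ) ≤ 1 - t)) (by linarith : (0:ℝ) ≤ 1 - β)]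
    · -- 1 < t < 2, τ = t - 1
      have hτeq : τ = t - 1 := by rw [hτdef]; exact max_eq_left (by linarith)
      rw [hτeq]
      have hw1 : (1:ℝ) ≤ E - (E-1)*(t-1) := by nlinarith
      have hw0 : (0:ℝ) < E - (E-1)*(t-1) := by linarith
      have hkey := phi_ineq hce hw0
      have hE' : E + (1-t)*(E-1) = E - (E-1)*(t-1) := by ring
      rw [hE']
      rw [← sub_nonneg]
      have heq : (t + β⁻¹ * ((β/c) * ((t - 1 - 1) + ((E - (E-1)*(t-1))/(E-1))
            * (Real.log (E-(E-1)*(t-1)) - 0)))) - (2 - 1/(E-1))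
          = ((E-1)*c*t + (E-1)*(t-2)
              + (E - (E-1)*(t-1)) * Real.log (E-(E-1)*(t-1)) - 2*(E-1)*c + c)
            / ((E-1)*c) := by
        field_simp
        ring
      rw [heq]
      apply div_nonneg _ (by positivity)
      nlinarith [hkey]

end CvarLemmas

section CvarLemmas2

variable {δ c β E : ℝ}

/-- regime A upper bound : s₀ ≤ s ≤ 1 -/
lemma cvar_ub_regA (hδ0 : 0 ≤ δ) (hδ1 : δ < 1) (hβ : β = 1 - δ) (hc : 0 < c)
    (hce : Real.exp c = 1 + 2*c) (hE : E = Real.exp (c/β)) {s : ℝ}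
    (hs0 : 0 < s) (hs1 : s ≤ 1) (hreg : (1+2*c)*(E-(E-1)*s) ≤ E) :
    cvar δ ((volume.restrict (Icc (0:ℝ) 1)).withDensity
        (fun x => ENNReal.ofReal (csrP β E c x))) (fun x => csrCost s x)
      ≤ 2*s - 1/(E-1) := by
  obtain ⟨hβ0, hβ1, hc54, hlogE, hE2c, hE1⟩ := basics hδ0 hδ1 hβ hc hce hE
  have ha : (0:ℝ) < E - 1 := by linarith
  have hw0 : (0:ℝ) < E - (E-1)*s := by nlinarith
  unfold cvar
  rw [if_neg hδ1.ne, ← hβ]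
  have hbdd : BddBelow (Set.range (fun t : ℝ => t + β⁻¹ * ∫ x, max (csrCost s x - t) 0
      ∂((volume.restrict (Icc (0:ℝ) 1)).withDensity
        (fun x => ENNReal.ofReal (csrP β E c x))))) := by
    refine ⟨0, ?_⟩
    rintro y ⟨t, rfl⟩
    exact h_nonneg hc hβ0 hβ1 hE1 hlogE hs0 t
  set q : ℝ := (E - (1+2*c)*(E-(E-1)*s))/(E-1) with hqdef
  have haq : (E-1)*q = E - (1+2*c)*(E-(E-1)*s) := by rw [hqdef]; field_simp
  have hq0 : 0 ≤ q := div_nonneg (by linarith) (by linarith)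
  have hqs : q ≤ s := by
    have h1 : (E-1)*q ≤ (E-1)*s := by
      rw [haq]
      nlinarith
    exact le_of_mul_le_mul_left h1 ha
  refine le_trans (ciInf_le hbdd (1+q)) ?_
  rw [hval hc hβ0 hE1 hs0 hq0 hqs hs1
    (γ := -q)
    (fun x hx0 hxq => by
      unfold csrCost
      rw [if_pos (by linarith : x ≤ s)]
      exact max_eq_right (by linarith))
    (fun x hx => by
      unfold csrCost
      rw [if_pos hx.2]
      rw [max_eq_left (by linarith [hx.1])]
      ring)
    (fun x hx1 hx2 => by
      unfold csrCost
      rw [if_neg (by linarith : ¬ x ≤ s)]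
      exact max_eq_right (by linarith))]
  have e1 : E-(E-1)*q = (1+2*c)*(E-(E-1)*s) := by linarith
  have e3 : E + (-q)*(E-1) = (1+2*c)*(E-(E-1)*s) := by linarith
  have hlogsplit : Real.log ((1+2*c)*(E-(E-1)*s)) = c + Real.log (E-(E-1)*s) := by
    rw [Real.log_mul (by positivity) hw0.ne', ← hce, Real.log_exp]
  rw [e1, e3, hlogsplit]
  apply le_of_eq
  rw [hqdef]
  field_simp
  ring

/-- regime B upper bound : 0 < s ≤ s₀ -/
lemma cvar_ub_regB (hδ0 : 0 ≤ δ) (hδ1 : δ < 1) (hβ : β = 1 - δ) (hc : 0 < c)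
    (hce : Real.exp c = 1 + 2*c) (hE : E = Real.exp (c/β)) {s : ℝ}
    (hs0 : 0 < s) (hs1 : s ≤ 1) (hreg : E ≤ (1+2*c)*(E-(E-1)*s)) :
    cvar δ ((volume.restrict (Icc (0:ℝ) 1)).withDensity
        (fun x => ENNReal.ofReal (csrP β E c x))) (fun x => csrCost s x)
      ≤ (2 - 1/(E-1))*s := by
  obtain ⟨hβ0, hβ1, hc54, hlogE, hE2c, hE1⟩ := basics hδ0 hδ1 hβ hc hce hE
  have ha : (0:ℝ) < E - 1 := by linarith
  have hw0 : (0:ℝ) < E - (E-1)*s := by nlinarith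
  have hE0 : (0:ℝ) < E := by linarith
  unfold cvar
  rw [if_neg hδ1.ne, ← hβ]
  have hbdd : BddBelow (Set.range (fun t : ℝ => t + β⁻¹ * ∫ x, max (csrCost s x - t) 0
      ∂((volume.restrict (Icc (0:ℝ) 1)).withDensity
        (fun x => ENNReal.ofReal (csrP β E c x))))) := by
    refine ⟨0, ?_⟩
    rintro y ⟨t, rfl⟩
    exact h_nonneg hc hβ0 hβ1 hE1 hlogE hs0 t
  refine le_trans (ciInf_le hbdd s) ?_
  rw [hval hc hβ0 hE1 hs0 le_rfl hs0.le hs1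
    (γ := 1-s)
    (fun x hx0 hx0' => by linarith)
    (fun x hx => by
      unfold csrCost
      rw [if_pos hx.2]
      rw [max_eq_left (by linarith [hx.1])]
      ring)
    (fun x hx1 hx2 => by
      unfold csrCost
      rw [if_neg (by linarith : ¬ x ≤ s)]
      simp)]
  -- abbreviations
  set w : ℝ := E - (E-1)*s with hwdef
  set v : ℝ := Real.log E - Real.log w with hvdef
  have e0 : E-(E-1)*0 = E := by ring
  rw [e0]
  have hv0 : 0 ≤ v := by
    rw [hvdef]
    have : w ≤ E := by rw [hwdef]; nlinarith
    have := Real.log_le_log hw0 this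
    linarith
  have hvc : v ≤ c := by
    rw [hvdef]
    have h1 : E/(1+2*c) ≤ w := by
      rw [div_le_iff₀ (by positivity)]
      rw [hwdef]; nlinarith
    have h2 := Real.log_le_log (by positivity) h1
    rw [Real.log_div hE0.ne' (by positivity : (1+2*c:ℝ) ≠ 0)] at h2
    have h3 : Real.log (1+2*c) = c := by rw [← hce, Real.log_exp]
    linarith [h2, h3 ▸ h2]
  have hev : Real.exp v = E / w := by
    rw [hvdef, Real.exp_sub, Real.exp_log hE0, Real.exp_log hw0]
  have hθ := theta_nonneg hc54 hce hE2c v ⟨hv0, hvc⟩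
  rw [hev] at hθ
  have hθw := mul_nonneg hθ hw0.le
  have hθeq : ((c+1-c/(E-1))*(E/w - 1) - v - ((E-1)/E)*v*(E/w)) * w
      = (c+1-c/(E-1))*(E - w) - v*w - (E-1)*v := by
    field_simp
  rw [hθeq] at hθw
  -- hθw : 0 ≤ k*(E-w) - v*w - (E-1)*v
  have hkey : v*(E + (1-s)*(E-1)) ≤ (c+1-c/(E-1))*((E-1)*s) := by
    have hEw : E - w = (E-1)*s := by rw [hwdef]; ring
    have hwa : E + (1-s)*(E-1) = w + (E-1) := by rw [hwdef]; ring
    rw [hwa]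
    nlinarith [hθw, hEw]
  rw [← sub_nonneg]
  have heq : (2 - 1/(E-1))*s - (s + β⁻¹ * ((β/c) * ((0 - s)
        + ((E + (1-s)*(E-1))/(E-1)) * (Real.log E - Real.log w))))
      = ((c+1-c/(E-1))*((E-1)*s) - v*(E + (1-s)*(E-1))) / ((E-1)*c) := by
    rw [hvdef]
    field_simp
    ring
  rw [heq]
  exact div_nonneg (by linarith) (by positivity)

end CvarLemmas2


section General

variable {δ : ℝ}

lemma cvar_nonneg_general (hδ0 : 0 ≤ δ) (hδ1 : δ < 1) (ν : Measure ℝ)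
    (hprob : IsProbabilityMeasure ν) (hν : ν (Iio 0) = 0) {s : ℝ} (hs : 0 < s) :
    0 ≤ cvar δ ν (fun x => csrCost s x) := by
  unfold cvar
  rw [if_neg hδ1.ne]
  have hκ0 : (0:ℝ) < (1-δ)⁻¹ := by
    apply inv_pos.2; linarith
  have hκ1 : (1:ℝ) ≤ (1-δ)⁻¹ := by
    rw [le_inv_comm₀ one_pos (show (0:ℝ) < 1 - δ by linarith)]
    rw [inv_one]
    linarith
  have hf_ae : ∀ᵐ x ∂ν, 0 ≤ csrCost s x := by
    rw [ae_iff]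
    apply measure_mono_null _ hν
    intro x hx
    simp only [mem_setOf_eq, not_le] at hx
    by_contra h
    simp only [mem_Iio, not_lt] at h
    exact absurd (cost_nonneg hs h) (by linarith)
  by_cases hint : ∀ t : ℝ, Integrable (fun x => max (csrCost s x - t) 0) ν
  · apply le_ciInf
    intro t
    rcases le_or_gt 0 t with ht | ht
    · have h0 : 0 ≤ ∫ x, max (csrCost s x - t) 0 ∂ν :=
        integral_nonneg (fun x => le_max_right _ _)
      have := mul_nonneg hκ0.le h0
      linarith
    · have hf_int : Integrable (fun x => csrCost s x) ν := by
        apply (hint (-1)).mono' (cost_meas s).aestronglyMeasurable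
        filter_upwards [hf_ae] with x hx
        rw [Real.norm_eq_abs, abs_of_nonneg hx]
        have : csrCost s x ≤ csrCost s x - (-1) := by linarith
        exact this.trans (le_max_left _ _)
      have h1 : ∫ x, (csrCost s x - t) ∂ν ≤ ∫ x, max (csrCost s x - t) 0 ∂ν :=
        integral_mono (hf_int.sub (integrable_const t)) (hint t)
          (fun x => le_max_left _ _)
      have h2 : ∫ x, (csrCost s x - t) ∂ν = (∫ x, csrCost s x ∂ν) - t := by
        rw [integral_sub hf_int (integrable_const t), MeasureTheory.integral_const]
        simp [hprob.measure_univ]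
      have h3 : 0 ≤ ∫ x, csrCost s x ∂ν := integral_nonneg_of_ae hf_ae
      have h4 : -t ≤ ∫ x, max (csrCost s x - t) 0 ∂ν := by linarith
      have h5 := mul_le_mul_of_nonneg_left h4 hκ0.le
      nlinarith
  · push_neg at hint
    obtain ⟨t₀, ht₀⟩ := hint
    have hall : ∀ t ≤ t₀, ¬ Integrable (fun x => max (csrCost s x - t) 0) ν := by
      intro t ht hInt
      apply ht₀
      apply hInt.mono'
        (((cost_meas s).sub measurable_const).max measurable_const).aestronglyMeasurable
      apply ae_of_all
      intro x
      rw [Real.norm_eq_abs, abs_of_nonneg (le_max_right _ _)]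
      apply max_le _ (le_max_right _ _)
      exact le_trans (by show csrCost s x - t₀ ≤ csrCost s x - t; linarith) (le_max_left (csrCost s x - t) 0)
    have hnb : ¬ BddBelow (Set.range (fun t : ℝ =>
        t + (1-δ)⁻¹ * ∫ x, max (csrCost s x - t) 0 ∂ν)) := by
      rintro ⟨b, hb⟩
      have hval' : ∀ t ≤ t₀, (t + (1-δ)⁻¹ * ∫ x, max (csrCost s x - t) 0 ∂ν) = t := by
        intro t ht
        rw [integral_undef (hall t ht), mul_zero, add_zero]
      have hmem := hb (mem_range_self (min b t₀ - 1))
      rw [hval' _ (by linarith [min_le_right b t₀])] at hmem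
      linarith [min_le_left b t₀]
    rw [Real.iInf_of_not_bddBelow hnb]

lemma csrCR_nonneg (hδ0 : 0 ≤ δ) (hδ1 : δ < 1) (ν : Measure ℝ)
    (hprob : IsProbabilityMeasure ν) (hν : ν (Iio 0) = 0) :
    0 ≤ csrCR δ ν := by
  unfold csrCR
  apply Real.iSup_nonneg
  rintro ⟨s, hs⟩
  unfold csrRatio
  apply div_nonneg (cvar_nonneg_general hδ0 hδ1 ν hprob hν hs)
  exact le_min (le_of_lt hs) zero_le_one

end General

/-- Theorem 3 final -/
theorem cvar_skirental_firstalg (δ c : ℝ) (hδ : δ ∈ Ico (0:ℝ) 1)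
    (hc : 0 < c) (hce : Real.exp c = 1 + 2 * c) :
    ∀ μ : Measure ℝ,
      μ = (volume.restrict (Icc (0:ℝ) 1)).withDensity
            (fun x => ENNReal.ofReal
              ((1 - δ) * (1 - Real.exp (c / (1 - δ)))
                / (c * (Real.exp (c / (1 - δ)) * (x - 1) - x)))) →
      csrCR δ μ = 2 - 1 / (Real.exp (c / (1 - δ)) - 1) ∧
      csrCR δ μ < 2 ∧ csrOpt δ < 2 := by
  intro μ hμ
  have hδ0 : 0 ≤ δ := hδ.1
  have hδ1 : δ < 1 := hδ.2
  set E : ℝ := Real.exp (c / (1 - δ)) with hEdef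
  obtain ⟨hβ0, hβ1, hc54, hlogE, hE2c, hE1⟩ :=
    basics (β := 1 - δ) (E := E) hδ0 hδ1 rfl hc hce hEdef
  have ha : (0:ℝ) < E - 1 := by linarith
  have hdens : (fun x => ENNReal.ofReal
      ((1 - δ) * (1 - Real.exp (c / (1 - δ)))
        / (c * (Real.exp (c / (1 - δ)) * (x - 1) - x))))
      = fun x => ENNReal.ofReal (csrP (1-δ) E c x) := by
    funext x
    congr 1
    unfold csrP
    rw [show c * (Real.exp (c/(1-δ)) * (x - 1) - x)
        = -(c * (E - (E - 1) * x)) by rw [hEdef]; ring,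
      show (1 - δ) * (1 - Real.exp (c/(1-δ))) = -((1-δ) * (E - 1)) by rw [hEdef]; ring,
      neg_div_neg_eq]
  rw [hdens] at hμ
  subst hμ
  haveI : Nonempty (Ioi (0:ℝ)) := ⟨⟨1, by norm_num⟩⟩
  set μ' : Measure ℝ := (volume.restrict (Icc (0:ℝ) 1)).withDensity
    (fun x => ENNReal.ofReal (csrP (1-δ) E c x)) with hμ'def
  have hub : ∀ p : Ioi (0:ℝ), csrRatio δ μ' (p : ℝ) ≤ 2 - 1/(E-1) := by
    rintro ⟨s, hs⟩
    simp only
    unfold csrRatio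
    rcases le_or_gt 1 s with h1s | h1s
    · rw [min_eq_right h1s, div_one]
      exact cvar_ub_big hδ0 hδ1 rfl hc hce hEdef h1s
    · rw [min_eq_left h1s.le, div_le_iff₀ hs]
      rcases le_or_gt ((1+2*c)*(E-(E-1)*s)) E with hreg | hreg
      · have h := cvar_ub_regA hδ0 hδ1 rfl hc hce hEdef hs h1s.le hreg
        have hss : s/(E-1) ≤ 1/(E-1) := by
          gcongr
        have hexp : (2 - 1/(E-1)) * s = 2*s - s/(E-1) := by ring
        linarith
      · exact cvar_ub_regB hδ0 hδ1 rfl hc hce hEdef hs h1s.le hreg.le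
  have h1 : csrRatio δ μ' 1 = 2 - 1/(E-1) := by
    unfold csrRatio
    rw [min_self, div_one]
    exact le_antisymm (cvar_ub_big hδ0 hδ1 rfl hc hce hEdef le_rfl)
      (cvar_lb_big hδ0 hδ1 rfl hc hce hEdef le_rfl)
  have hCR : csrCR δ μ' = 2 - 1/(E-1) := by
    unfold csrCR
    apply le_antisymm (ciSup_le hub)
    have hb : BddAbove (Set.range fun p : Ioi (0:ℝ) => csrRatio δ μ' (p : ℝ)) := by
      refine ⟨2 - 1/(E-1), ?_⟩
      rintro y ⟨p, rfl⟩
      exact hub p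
    calc 2 - 1/(E-1) = csrRatio δ μ' 1 := h1.symm
      _ ≤ ⨆ p : Ioi (0:ℝ), csrRatio δ μ' (p : ℝ) :=
        le_ciSup hb (⟨1, by norm_num⟩ : Ioi (0:ℝ))
  have hlt2 : 2 - 1/(E-1) < 2 := by
    have : 0 < 1/(E-1) := by positivity
    linarith
  refine ⟨hCR, by rw [hCR]; exact hlt2, ?_⟩
  have hprob : IsProbabilityMeasure μ' := csrMu_prob hc hβ0 hE1 hlogE
  have hnull : μ' (Iio 0) = 0 := csrMu_null hβ0
  have hbdd : BddBelow (Set.range fun m : {m : Measure ℝ //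
      IsProbabilityMeasure m ∧ m (Iio 0) = 0} => csrCR δ (m : Measure ℝ)) := by
    refine ⟨0, ?_⟩
    rintro y ⟨m, rfl⟩
    exact csrCR_nonneg hδ0 hδ1 (m : Measure ℝ) m.2.1 m.2.2
  calc csrOpt δ ≤ csrCR δ μ' := ciInf_le hbdd ⟨μ', hprob, hnull⟩
    _ < 2 := by rw [hCR]; exact hlt2
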